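/- Let f and g be negative convex increasing functions on ℝ_{<0}. Then lim_{c→+∞} P(f, g+c) = f pointwise on ℝ_{<0} if and only if lim_{t→−∞} f(t)/t ≥ lim_{t→−∞} g(t)/t (these limits exist in [0, +∞] by convexity). -/

import Mathlib

open Filter MeasureTheory Metric Set
open scoped ENNReal Topology

set_option maxHeartbeats 1000000

noncomputable section

/-- The convex envelope `P(f, g+c)(t)`: the supremum at `t` of all convex functions on
`ℝ_{<0}` lying below `min(f, g+c)` there. -/
def convEnv1 (f g : ℝ → ℝ) (c : ℝ) (t : ℝ) : EReal :=
  ⨆ (u : ℝ → ℝ) (_ : ConvexOn ℝ (Iio (0:ℝ)) u ∧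
      ∀ s ∈ Iio (0:ℝ), u s ≤ min (f s) (g s + c)), ((u t : ℝ) : EReal)

/-- The slope at infinity `lim_{t→-∞} h(t)/t`, as a `limsup` in `EReal` (for convex
increasing `h` the limit exists in `[0,+∞]`). -/
def slopeAtBot (h : ℝ → ℝ) : EReal :=
  Filter.limsup (fun t : ℝ => ((h t / t : ℝ) : EReal)) atBot

private lemma tendsto_const_div_atBot' (b : ℝ) :
    Tendsto (fun s : ℝ => b / s) atBot (𝓝 0) := by
  have h : Tendsto (fun s : ℝ => -b * (-s)⁻¹) atBot (𝓝 (-b * 0)) :=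
    ((tendsto_inv_atTop_zero).comp tendsto_neg_atBot_atTop).const_mul (-b)
  rw [mul_zero] at h
  refine h.congr fun s => ?_
  rw [inv_neg, div_eq_mul_inv]; ring

private lemma limsup_coe_le_of_le_tendsto {u φ : ℝ → ℝ} {L : ℝ}
    (h : ∀ᶠ s in atBot, u s ≤ φ s) (hφ : Tendsto φ atBot (𝓝 L)) :
    Filter.limsup (fun s => ((u s : ℝ) : EReal)) atBot ≤ (L : EReal) := by
  have h1 : Filter.limsup (fun s => ((u s : ℝ) : EReal)) atBot ≤
      Filter.limsup (fun s => ((φ s : ℝ) : EReal)) atBot :=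
    limsup_le_limsup (by filter_upwards [h] with s hs; exact EReal.coe_le_coe_iff.2 hs)
  have h2 : Filter.limsup (fun s => ((φ s : ℝ) : EReal)) atBot = (L : EReal) :=
    (EReal.tendsto_coe.2 hφ).limsup_eq
  rw [h2] at h1; exact h1

private lemma coe_le_limsup_of_tendsto_le {u φ : ℝ → ℝ} {L : ℝ}
    (h : ∀ᶠ s in atBot, φ s ≤ u s) (hφ : Tendsto φ atBot (𝓝 L)) :
    (L : EReal) ≤ Filter.limsup (fun s => ((u s : ℝ) : EReal)) atBot := by
  have h2 : Filter.liminf (fun s => ((φ s : ℝ) : EReal)) atBot = (L : EReal) :=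
    (EReal.tendsto_coe.2 hφ).liminf_eq
  have h1 : Filter.liminf (fun s => ((φ s : ℝ) : EReal)) atBot ≤
      Filter.liminf (fun s => ((u s : ℝ) : EReal)) atBot :=
    liminf_le_liminf (by filter_upwards [h] with s hs; exact EReal.coe_le_coe_iff.2 hs)
  rw [h2] at h1
  exact h1.trans liminf_le_limsup

/-- division flip: if `v ≤ w` and `s < 0` then `w/s ≤ v/s`. -/
private lemma div_flip {v w s : ℝ} (h : v ≤ w) (hs : s < 0) : w / s ≤ v / s := by
  have h2 : 0 ≤ (v - w) / s := div_nonneg_of_nonpos (by linarith) hs.le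
  have h3 : (v - w) / s = v / s - w / s := by ring
  linarith [h3 ▸ h2]

/-- For negative convex increasing functions `f, g` on `ℝ_{<0}`,
`lim_{c→∞} P(f,g+c) = f` pointwise iff `lim_{t→-∞} f(t)/t ≥ lim_{t→-∞} g(t)/t`. -/
theorem convEnv1_tendsto_iff_slope (f g : ℝ → ℝ)
    (hfconv : ConvexOn ℝ (Iio (0:ℝ)) f) (hgconv : ConvexOn ℝ (Iio (0:ℝ)) g)
    (hfmono : MonotoneOn f (Iio (0:ℝ))) (hgmono : MonotoneOn g (Iio (0:ℝ)))
    (hfneg : ∀ t < (0:ℝ), f t < 0) (hgneg : ∀ t < (0:ℝ), g t < 0) :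
    (∀ t < (0:ℝ), Tendsto (fun c : ℝ => convEnv1 f g c t) atTop (𝓝 ((f t : ℝ) : EReal)))
      ↔ slopeAtBot g ≤ slopeAtBot f := by
  have hEle : ∀ (c t : ℝ), t < 0 → convEnv1 f g c t ≤ ((f t : ℝ) : EReal) := by
    intro c t ht
    refine iSup₂_le fun u hu => ?_
    exact EReal.coe_le_coe_iff.2 ((hu.2 t ht).trans (min_le_left _ _))
  constructor
  · -- forward direction
    intro H
    have hg1 : g (-1) < 0 := hgneg _ (by norm_num)
    have hg2 : g (-2) < 0 := hgneg _ (by norm_num)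
    have hf1 : f (-1) < 0 := hfneg _ (by norm_num)
    set k₀ : ℝ := g (-1) - g (-2) with hk₀def
    have hk₀ : 0 ≤ k₀ := by
      have := hgmono (show (-2:ℝ) ∈ Iio 0 by norm_num) (show (-1:ℝ) ∈ Iio 0 by norm_num)
        (by norm_num)
      simp only [hk₀def]; linarith
    set K : ℝ := k₀ + (-(g (-2)))/2 with hKdef
    -- slopeAtBot g is a finite nonnegative real `a`
    have hAtop : slopeAtBot g ≤ (K : EReal) := by
      refine limsup_coe_le_of_le_tendsto (φ := fun _ => K) ?_ tendsto_const_nhds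
      filter_upwards [eventually_le_atBot (-2 : ℝ)] with y hy
      rcases eq_or_lt_of_le hy with rfl | hy2
      · rw [show g (-2) / (-2) = (-(g (-2)))/2 by ring]
        simp only [hKdef]; linarith
      have hy0 : y < 0 := by linarith
      have hsl := hgconv.slope_mono_adjacent (show y ∈ Iio 0 from hy0)
        (show (-1:ℝ) ∈ Iio 0 by norm_num) hy2 (by norm_num)
      rw [div_le_iff₀ (by linarith : (0:ℝ) < -2 - y)] at hsl
      -- g y ≥ g (-2) - k₀ * (-2 - y)
      have hlow : g (-2) + k₀ * (y + 2) ≤ g y := by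
        have : (g (-1) - g (-2)) / (-1 - -2) = k₀ := by norm_num [hk₀def]
        rw [this] at hsl; nlinarith
      have := div_flip hlow hy0
      refine this.trans ?_
      rw [div_le_iff_of_neg hy0]
      simp only [hKdef]; nlinarith
    have hA0 : (0 : EReal) ≤ slopeAtBot g := by
      have := coe_le_limsup_of_tendsto_le (u := fun y => g y / y) (φ := fun _ => (0:ℝ))
        (by filter_upwards [eventually_le_atBot (-1 : ℝ)] with y hy
            have hy0 : y < 0 := by linarith
            exact div_nonneg_of_nonpos (hgneg y hy0).le hy0.le)
        tendsto_const_nhds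
      simpa [slopeAtBot] using this
    set a : ℝ := (slopeAtBot g).toReal with hadef
    have hAa : slopeAtBot g = (a : EReal) := by
      refine (EReal.coe_toReal ?_ ?_).symm
      · exact (lt_of_le_of_lt hAtop (EReal.coe_lt_top K)).ne
      · exact fun h => by simp [h] at hA0
    have ha0 : 0 ≤ a := by
      rw [hAa] at hA0
      exact_mod_cast (by simpa using hA0 : ((0:ℝ) : EReal) ≤ (a : EReal))
    -- key estimate
    have key : ∀ t, t < -1 → f t ≤ f (-1) + a * (t + 1) := by
      intro t ht
      have ht0 : t < 0 := by linarith
      rcases eq_or_lt_of_le ha0 with haz | hapos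
      · rw [← haz]
        have := hfmono (show t ∈ Iio 0 from ht0) (show (-1:ℝ) ∈ Iio 0 by norm_num) ht.le
        linarith
      by_contra hcon
      push_neg at hcon
      set δ : ℝ := f t - (f (-1) + a * (t + 1)) with hδdef
      have hδpos : 0 < δ := by simp only [hδdef]; linarith
      set β : ℝ := -1 - t with hβdef
      have hβpos : 0 < β := by simp only [hβdef]; linarith
      have hev := (H t ht0).eventually_const_lt
        (show ((f t - δ/2 : ℝ) : EReal) < ((f t : ℝ) : EReal) from
          EReal.coe_lt_coe_iff.2 (by linarith))
      obtain ⟨c, hcE, hc0⟩ := (hev.and (eventually_ge_atTop (0:ℝ))).exists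
      set ε : ℝ := min a (δ / (4 * β)) with hεdef
      have hεpos : 0 < ε := lt_min hapos (by positivity)
      have hεa : ε ≤ a := min_le_left _ _
      have hεδ : β * ε ≤ δ / 4 := by
        have h1 : ε ≤ δ / (4 * β) := min_le_right _ _
        calc β * ε ≤ β * (δ / (4 * β)) := by nlinarith
          _ = δ / 4 := by field_simp
      have hcf : 0 < c - f (-1) := by linarith
      set Y₁ : ℝ := -1 - 4 * β * (c - f (-1)) / δ with hY₁def
      -- find a suitable very negative y
      have hfreq : ∃ y, y ≤ min (t - 1) Y₁ ∧ a - ε < g y / y := by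
        by_contra hno
        push_neg at hno
        have hup : slopeAtBot g ≤ ((a - ε : ℝ) : EReal) := by
          refine limsup_coe_le_of_le_tendsto (φ := fun _ => a - ε) ?_ tendsto_const_nhds
          exact eventually_atBot.2 ⟨min (t - 1) Y₁, fun y hy => hno y hy⟩
        rw [hAa] at hup
        have := EReal.coe_le_coe_iff.1 hup
        linarith
      obtain ⟨y, hym, hgy⟩ := hfreq
      have hyt : y < t := by
        have := le_trans hym (min_le_left _ _); linarith
      have hyY : y ≤ Y₁ := le_trans hym (min_le_right _ _)
      have hy0 : y < 0 := by linarith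
      have hy1 : 0 < -1 - y := by linarith
      set μ : ℝ := β / (-1 - y) with hμdef
      have hμpos : 0 < μ := by positivity
      have hμlt : μ < 1 := by
        rw [hμdef, div_lt_one hy1]; simp only [hβdef]; linarith
      -- envelope upper bound via convex combination
      have hcomb : convEnv1 f g c t ≤ (((1-μ) * f (-1) + μ * (g y + c) : ℝ) : EReal) := by
        refine iSup₂_le fun u hu => ?_
        have hpt : (1-μ) • (-1 : ℝ) + μ • y = t := by
          simp only [smul_eq_mul, hμdef]
          field_simp
          simp only [hβdef]; ring
        have h1 := hu.1.2 (show (-1:ℝ) ∈ Iio 0 by norm_num) (show y ∈ Iio 0 from hy0)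
          (by linarith : (0:ℝ) ≤ 1 - μ) hμpos.le (by ring)
        rw [hpt] at h1
        simp only [smul_eq_mul] at h1
        have h2 : u (-1) ≤ f (-1) := (hu.2 (-1) (by norm_num)).trans (min_le_left _ _)
        have h3 : u y ≤ g y + c := (hu.2 y hy0).trans (min_le_right _ _)
        refine EReal.coe_le_coe_iff.2 ?_
        nlinarith
      -- numeric estimate of the RHS
      have p1 : g y ≤ (a - ε) * y := ((lt_div_iff_of_neg hy0).1 hgy).le
      have p2 : μ * y ≤ -β := by
        rw [hμdef, div_mul_eq_mul_div, div_le_iff₀ hy1]; nlinarith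
      have p3 : μ * g y ≤ -β * a + δ / 4 := by
        have h1 : μ * g y ≤ μ * ((a - ε) * y) := by nlinarith
        have h2 : μ * ((a - ε) * y) = (a - ε) * (μ * y) := by ring
        have h3 : (a - ε) * (μ * y) ≤ (a - ε) * (-β) := by nlinarith
        nlinarith
      have p4 : μ * (c - f (-1)) ≤ δ / 4 := by
        have h1 : -1 - y ≥ 4 * β * (c - f (-1)) / δ := by
          simp only [hY₁def] at hyY; linarith
        have h2 : μ ≤ δ / (4 * (c - f (-1))) := by
          rw [hμdef, div_le_div_iff₀ hy1 (by positivity)]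
          calc β * (4 * (c - f (-1))) = δ * (4 * β * (c - f (-1)) / δ) := by
                field_simp
            _ ≤ δ * (-1 - y) := by nlinarith
        calc μ * (c - f (-1)) ≤ (δ / (4 * (c - f (-1)))) * (c - f (-1)) := by nlinarith
          _ = δ / 4 := by field_simp
      have hfinal : (1-μ) * f (-1) + μ * (g y + c) ≤ f t - δ / 2 := by
        have expand : (1-μ) * f (-1) + μ * (g y + c) =
            f (-1) + μ * (c - f (-1)) + μ * g y := by ring
        have htarget : f t - δ / 2 = f (-1) - β * a + δ / 2 := by
          simp only [hδdef, hβdef]; ring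
        rw [expand, htarget]; nlinarith
      have : convEnv1 f g c t ≤ ((f t - δ/2 : ℝ) : EReal) :=
        hcomb.trans (EReal.coe_le_coe_iff.2 hfinal)
      exact absurd this (not_le.2 hcE)
    -- conclude : a ≤ slopeAtBot f
    have hmainf : (a : EReal) ≤ slopeAtBot f := by
      refine coe_le_limsup_of_tendsto_le (φ := fun s => a + (f (-1) + a) / s) ?_ ?_
      · filter_upwards [eventually_le_atBot (-2 : ℝ)] with s hs
        have hs1 : s < -1 := by linarith
        have hs0 : s < 0 := by linarith
        have h1 : f s ≤ a * s + (f (-1) + a) := by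
          have := key s hs1; nlinarith
        have h2 := div_flip h1 hs0
        have h3 : (a * s + (f (-1) + a)) / s = a + (f (-1) + a) / s := by
          field_simp [hs0.ne]
        linarith [h3 ▸ h2]
      · have := (tendsto_const_div_atBot' (f (-1) + a)).const_add a
        simpa using this
    rw [hAa]; exact hmainf
  · -- backward direction
    intro hsl t ht
    -- supgradient slope k of f at t
    set S : Set ℝ := (fun s => (f t - f s) / (t - s)) '' Iio t with hSdef
    have htmem : t ∈ Iio (0:ℝ) := ht
    have ht2 : t < t/2 := by linarith
    have ht20 : t/2 < 0 := by linarith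
    have hSne : S.Nonempty := ⟨_, ⟨t - 1, by simp, rfl⟩⟩
    have hbdd : BddAbove S := by
      refine ⟨(f (t/2) - f t) / (t/2 - t), ?_⟩
      rintro x ⟨s, hs, rfl⟩
      exact hfconv.slope_mono_adjacent (show s ∈ Iio (0:ℝ) by exact lt_trans hs ht)
        (show t/2 ∈ Iio (0:ℝ) from ht20) hs ht2
    set k : ℝ := sSup S with hkdef
    have hk_ge : ∀ s, s < t → (f t - f s) / (t - s) ≤ k :=
      fun s hs => le_csSup hbdd ⟨s, hs, rfl⟩
    have hk_le : ∀ σ, t < σ → σ < 0 → k ≤ (f σ - f t) / (σ - t) := by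
      intro σ h1 h2
      refine csSup_le hSne ?_
      rintro x ⟨s, hs, rfl⟩
      exact hfconv.slope_mono_adjacent (show s ∈ Iio (0:ℝ) by exact lt_trans hs ht)
        (show σ ∈ Iio (0:ℝ) from h2) hs h1
    have hk0 : 0 ≤ k := by
      refine le_trans ?_ (hk_ge (t - 1) (by linarith))
      have := hfmono (show t - 1 ∈ Iio (0:ℝ) by simp; linarith) htmem (by linarith)
      rw [show t - (t-1) = 1 by ring]
      simp; linarith
    -- tangent line property
    have htan : ∀ σ, σ < 0 → f t + k * (σ - t) ≤ f σ := by
      intro σ hσ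
      rcases lt_trichotomy σ t with h | rfl | h
      · have h1 := hk_ge σ h
        rw [div_le_iff₀ (by linarith : (0:ℝ) < t - σ)] at h1
        nlinarith
      · simp
      · have h1 := hk_le σ h hσ
        rw [le_div_iff₀ (by linarith : (0:ℝ) < σ - t)] at h1
        nlinarith
    -- slopeAtBot f ≤ k
    have hfk : slopeAtBot f ≤ (k : EReal) := by
      refine limsup_coe_le_of_le_tendsto (φ := fun s => k + (f t - k * t) / s) ?_ ?_
      · filter_upwards [eventually_le_atBot (t - 1)] with s hs
        have hs0 : s < 0 := by linarith
        have h1 : k * s + (f t - k * t) ≤ f s := by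
          have := htan s hs0; nlinarith
        have h2 := div_flip h1 hs0
        have h3 : (k * s + (f t - k * t)) / s = k + (f t - k * t) / s := by field_simp [hs0.ne]
        linarith [h3 ▸ h2]
      · have := (tendsto_const_div_atBot' (f t - k * t)).const_add k
        simpa using this
    have hslk : slopeAtBot g ≤ (k : EReal) := hsl.trans hfk
    refine tendsto_order.2 ⟨?_, ?_⟩
    · -- lower bound part
      intro b hb
      obtain ⟨x, hbx, hxf⟩ := EReal.lt_iff_exists_real_btwn.1 hb
      have hεpos : 0 < f t - x := by
        have := EReal.coe_lt_coe_iff.1 hxf; linarith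
      set ε : ℝ := f t - x with hεdef
      set δ : ℝ := ε / (2 * (-t)) with hδdef
      have hδpos : 0 < δ := div_pos hεpos (by linarith)
      set ℓ : ℝ → ℝ := fun σ => f t - ε + (k + δ) * (σ - t) with hℓdef
      have hℓf : ∀ σ, σ < 0 → ℓ σ ≤ f σ := by
        intro σ hσ
        have h1 := htan σ hσ
        have h2 : δ * (σ - t) ≤ ε := by
          rcases le_or_gt σ t with h | h
          · nlinarith
          · have h3 : σ - t < -t := by linarith
            have h4 : δ * (σ - t) ≤ δ * (-t) := by nlinarith
            have h5 : δ * (-t) = ε / 2 := by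
              rw [hδdef]; field_simp [ht.ne]
            linarith
        simp only [hℓdef]; nlinarith
      -- find y₀ with small secant slope for g
      have hy₀ : ∃ y₀, y₀ < -1 ∧ (g (-1) - g y₀) / (-1 - y₀) < k + δ := by
        by_contra hno
        push_neg at hno
        have h2 : ((k + δ : ℝ) : EReal) ≤ slopeAtBot g := by
          refine coe_le_limsup_of_tendsto_le
            (φ := fun y => (k + δ) + (g (-1) + (k + δ)) / y) ?_ ?_
          · filter_upwards [eventually_le_atBot (-2 : ℝ)] with y hy
            have hy1 : y < -1 := by linarith
            have hy0 : y < 0 := by linarith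
            have h1 := hno y hy1
            rw [le_div_iff₀ (by linarith : (0:ℝ) < -1 - y)] at h1
            have h3 : g y ≤ (k + δ) * y + (g (-1) + (k + δ)) := by nlinarith
            have h4 := div_flip h3 hy0
            have h5 : ((k + δ) * y + (g (-1) + (k + δ))) / y =
                (k + δ) + (g (-1) + (k + δ)) / y := by field_simp [hy0.ne]
            linarith [h5 ▸ h4]
          · have := (tendsto_const_div_atBot' (g (-1) + (k + δ))).const_add (k + δ)
            simpa using this
        have := h2.trans hslk
        have := EReal.coe_le_coe_iff.1 this
        linarith
      obtain ⟨y₀, hy₀1, hy₀2⟩ := hy₀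
      have hy₀0 : y₀ < 0 := by linarith
      set k₀ : ℝ := (g (-1) - g y₀) / (-1 - y₀) with hk₀def
      -- lower bound for g to the left of y₀
      have hglow : ∀ σ, σ ≤ y₀ → g (-1) + k₀ * (σ + 1) ≤ g σ := by
        intro σ hσ
        have hσ0 : σ < 0 := by linarith
        have hσ1 : σ < -1 := by linarith
        have hsec := hgconv.secant_mono (show (-1:ℝ) ∈ Iio 0 by norm_num)
          (show σ ∈ Iio (0:ℝ) from hσ0) (show y₀ ∈ Iio (0:ℝ) from hy₀0)
          (by linarith : σ ≠ -1) (by linarith : y₀ ≠ -1) hσ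
        have hflip : (g y₀ - g (-1)) / (y₀ - (-1)) = k₀ := by
          rw [hk₀def, ← neg_div_neg_eq]; ring_nf
        rw [hflip] at hsec
        rw [div_le_iff_of_neg (by linarith : σ - (-1) < 0)] at hsec
        nlinarith
      have hkk₀ : k₀ < k + δ := hy₀2
      -- choose c
      set C₂ : ℝ := f t - ε + (k + δ) * (-t) with hC₂def
      set D : ℝ := f t - ε - (k + δ) * t - g (-1) - k₀ with hDdef
      set c : ℝ := max ((k + δ - k₀) * y₀ + D) (C₂ - g y₀) with hcdef
      filter_upwards [eventually_ge_atTop c] with c' hc'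
      -- ℓ is admissible for c'
      have hadm : ConvexOn ℝ (Iio (0:ℝ)) ℓ ∧
          ∀ s ∈ Iio (0:ℝ), ℓ s ≤ min (f s) (g s + c') := by
        constructor
        · refine ⟨convex_Iio _, ?_⟩
          intro p hp q hq wp wq hwp hwq hw
          simp only [hℓdef, smul_eq_mul]
          have : wp * (f t - ε + (k + δ) * (p - t)) + wq * (f t - ε + (k + δ) * (q - t))
              = f t - ε + (k + δ) * ((wp * p + wq * q) - t)
                + (wp + wq - 1) * (f t - ε - (k + δ) * t) := by ring
          rw [this, hw]
          simp
        · intro s hs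
          refine le_min (hℓf s hs) ?_
          rcases le_or_gt s y₀ with h | h
          · have h1 := hglow s h
            have h2 : (k + δ - k₀) * s ≤ (k + δ - k₀) * y₀ := by nlinarith
            have h3 : (k + δ - k₀) * y₀ + D ≤ c' :=
              le_trans (le_trans (le_max_left _ _) le_rfl) hc'
            simp only [hℓdef, hDdef] at *
            nlinarith
          · have h1 : g y₀ ≤ g s := hgmono (show y₀ ∈ Iio (0:ℝ) from hy₀0) hs h.le
            have h2 : ℓ s ≤ C₂ := by
              have hs0 : s < 0 := hs
              simp only [hℓdef, hC₂def]
              have : s - t ≤ -t := by linarith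
              nlinarith
            have h3 : C₂ - g y₀ ≤ c' := le_trans (le_max_right _ _) hc'
            linarith
      have hlift : ((ℓ t : ℝ) : EReal) ≤ convEnv1 f g c' t := le_iSup₂_of_le ℓ hadm le_rfl
      have hℓt : ℓ t = x := by simp only [hℓdef, hεdef]; ring
      rw [hℓt] at hlift
      exact lt_of_lt_of_le hbx hlift
    · intro b hb
      filter_upwards with c
      exact lt_of_le_of_lt (hEle c t ht) hb

end
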